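/- Let κ₀, θ∞ ∈ ℂ, let U ⊆ ℂ be a nonempty open connected set, and let f, g : U → ℂ be differentiable functions with f(t) ≠ 0 for all t ∈ U that solve the Okamoto Hamiltonian system for P_IV with parameters κ₀, θ∞. Define q(t) = f(t) and p(t) = g(t) − f(t)/4 − t/2 − κ₀/(2f(t)). Then q, p are differentiable and solve the Its–Prokhorov Hamiltonian system for P_IV on U with parameters Θ₀ = κ₀/2 and Θ∞ = 1 + θ∞ − κ₀/2. -/

import Mathlib

open Complex


private theorem keyIdentityPIV (ft gt t κ₀ θoo : ℂ) (hne : ft ≠ 0) :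
    -2 * (gt - ft / 4 - t / 2 - κ₀ / (2 * ft)) ^ 2 + 3 * ft ^ 2 / 8 + ft * t + t ^ 2 / 2
      - (1 + θoo - κ₀ / 2) + 1 / 2 - 2 * (κ₀ / 2) ^ 2 / ft ^ 2 =
    -2 * gt ^ 2 + 2 * ft * gt + 2 * t * gt - θoo - (4 * ft * gt - ft ^ 2 - 2 * t * ft - 2 * κ₀) / 4 - 1 / 2 -
      (0 * (2 * ft) - κ₀ * (2 * (4 * ft * gt - ft ^ 2 - 2 * t * ft - 2 * κ₀))) / (2 * ft) ^ 2 := by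
  obtain ⟨u, hu⟩ : ∃ u, ft * u = 1 := ⟨ft⁻¹, mul_inv_cancel₀ hne⟩
  have e1 : κ₀ / (2 * ft) = κ₀ * u / 2 := by
    rw [div_eq_div_iff (by simp [hne]) two_ne_zero]
    linear_combination (-2 * κ₀) * hu
  have e2 : 2 * (κ₀ / 2) ^ 2 / ft ^ 2 = κ₀ ^ 2 * u ^ 2 / 2 := by
    rw [div_eq_div_iff (pow_ne_zero 2 hne) two_ne_zero]
    linear_combination (-κ₀ ^ 2 * (ft * u + 1)) * hu
  have e3 : (0 * (2 * ft) - κ₀ * (2 * (4 * ft * gt - ft ^ 2 - 2 * t * ft - 2 * κ₀))) / (2 * ft) ^ 2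
      = -(κ₀ * (4 * ft * gt - ft ^ 2 - 2 * t * ft - 2 * κ₀)) * u ^ 2 / 2 := by
    rw [div_eq_div_iff (by simp [hne] : (2*ft)^2 ≠ 0) two_ne_zero]
    linear_combination (κ₀ * (4 * ft * gt - ft ^ 2 - 2 * t * ft - 2 * κ₀)) * (ft * u + 1) * 4 * hu
  rw [e1, e2, e3]
  linear_combination (κ₀ * u * (ft / 2 + t - 2 * gt)) * hu

/-- the change of variables `q = f`, `p = g − f/4 − t/2 − κ₀/(2f)` maps
solutions of the Okamoto Hamiltonian system for P_IV with parameters `κ₀, θ∞` to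
solutions of the Its–Prokhorov Hamiltonian system for P_IV with parameters
`Θ₀ = κ₀/2`, `Θ∞ = 1 + θ∞ − κ₀/2`. -/
theorem okamoto_to_its_prokhorov_PIV
    (κ₀ θoo : ℂ) (U : Set ℂ)
    (hUo : IsOpen U) (hUne : U.Nonempty) (hUc : IsPreconnected U)
    (f g : ℂ → ℂ)
    (hf0 : ∀ t ∈ U, f t ≠ 0)
    (hf : ∀ t ∈ U, HasDerivAt f (4 * f t * g t - (f t) ^ 2 - 2 * t * f t - 2 * κ₀) t)
    (hg : ∀ t ∈ U, HasDerivAt g (-2 * (g t) ^ 2 + 2 * f t * g t + 2 * t * g t - θoo) t)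
    (Θ₀ Θoo : ℂ) (hΘ₀ : Θ₀ = κ₀ / 2) (hΘoo : Θoo = 1 + θoo - κ₀ / 2)
    (q p : ℂ → ℂ)
    (hq_def : ∀ t, q t = f t)
    (hp_def : ∀ t, p t = g t - f t / 4 - t / 2 - κ₀ / (2 * f t)) :
    ∀ t ∈ U,
      HasDerivAt q (4 * p t * q t) t ∧
      HasDerivAt p
        (-2 * (p t) ^ 2 + 3 * (q t) ^ 2 / 8 + q t * t + t ^ 2 / 2 - Θoo + 1 / 2
          - 2 * Θ₀ ^ 2 / (q t) ^ 2) t := by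
  intro t ht
  have hne := hf0 t ht
  have hne2 : (2 : ℂ) * f t ≠ 0 := by simp [hne]
  have hft := hf t ht
  have hgt := hg t ht
  have hqf : q = f := funext hq_def
  constructor
  · rw [hqf]
    convert hft using 1
    rw [hp_def]
    field_simp
    ring
  · have hpfun : p = fun s => g s - f s / 4 - s / 2 - κ₀ / (2 * f s) := funext hp_def
    rw [hpfun]
    have hd := ((hgt.sub (hft.div_const 4)).sub ((hasDerivAt_id t).div_const 2)).sub
      ((hasDerivAt_const t κ₀).div (hft.const_mul 2) hne2)
    convert hd using 1
    case e'_4 => rfl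
    case e'_5 => rfl
    case e'_8 => rfl
    simp only [hq_def, hΘ₀, hΘoo]
    exact keyIdentityPIV (f t) (g t) t κ₀ θoo hne
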